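/- The number of arrangements of m pebbles (linear orders on subsets of [m]) is at most 2^m · m!, and if a feasible transition sequence of a PIA contains two indices h₁ < h₂ with equal transitions t_{h₁} = t_{h₂} and equal arrangements O_{h₁} = O_{h₂}, then the sequence obtained by deleting the segment between them (keeping t₁,…,t_{h₁}, t_{h₂+1},…,t_r) is also feasible and ends in the same state. -/

import Mathlib

/-- A pebble-intervals automaton (PIA): alphabet `α`, `m` pebbles, states `Q`,
initial state `qinit`, accepting states `F`, silent transitions `silent` and
move transitions `move q k i j a q'` where `i = none` denotes the left boundary ▷
and `j = none` denotes the right boundary ◁. -/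
structure PIA (α : Type) where
  m : ℕ
  Q : Type
  qinit : Q
  F : Set Q
  silent : Q → Q → Prop
  move : Q → Fin m → Option (Fin m) → Option (Fin m) → α → Q → Prop

/-- A configuration of a PIA on a string of length `n`: current state, pebble
assignment, and set of already-read positions. -/
structure PIAConfig {α : Type} (A : PIA α) (n : ℕ) where
  q : A.Q
  ρ : Fin A.m → Option (Fin n)
  N : Set (Fin n)

/-- Pebble `i` (or the left boundary, if `i = none`) lies strictly left of `ℓ`. -/
def leftOK {m n : ℕ} (ρ : Fin m → Option (Fin n)) (i : Option (Fin m)) (ℓ : Fin n) : Prop :=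
  match i with
  | none => True
  | some p => ∃ pi, ρ p = some pi ∧ pi < ℓ

/-- Pebble `j` (or the right boundary, if `j = none`) lies strictly right of `ℓ`. -/
def rightOK {m n : ℕ} (ρ : Fin m → Option (Fin n)) (j : Option (Fin m)) (ℓ : Fin n) : Prop :=
  match j with
  | none => True
  | some p => ∃ pj, ρ p = some pj ∧ ℓ < pj

/-- One step of a PIA on input `u`: either a silent transition, or a move
transition placing pebble `k` on an unread position strictly between `i` and `j`,
reading the letter there. -/
def PIAStep {α : Type} (A : PIA α) {n : ℕ} (u : Fin n → α)
    (c c' : PIAConfig A n) : Prop :=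
  (A.silent c.q c'.q ∧ c'.ρ = c.ρ ∧ c'.N = c.N) ∨
  (∃ (k : Fin A.m) (i j : Option (Fin A.m)) (ℓ : Fin n),
    A.move c.q k i j (u ℓ) c'.q ∧ ℓ ∉ c.N ∧
    leftOK c.ρ i ℓ ∧ rightOK c.ρ j ℓ ∧
    c'.ρ = Function.update c.ρ k (some ℓ) ∧ c'.N = insert ℓ c.N)

/-- The initial configuration: initial state, no pebbles placed, nothing read. -/
def PIAInit {α : Type} (A : PIA α) (n : ℕ) : PIAConfig A n :=
  ⟨A.qinit, fun _ => none, ∅⟩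

/-- A PIA accepts a string `u` if some computation from the initial configuration
reads all positions of `u` and ends in an accepting state. -/
def PIA.Accepts {α : Type} (A : PIA α) (u : List α) : Prop :=
  ∃ c : PIAConfig A u.length,
    Relation.ReflTransGen (PIAStep A u.get) (PIAInit A u.length) c ∧
    c.q ∈ A.F ∧ c.N = Set.univ

/-- A transition of a PIA: either silent or a move transition, together with
its source and target states. -/
inductive PTrans {α : Type} (A : PIA α) : Type
  | silent (q q' : A.Q)
  | move (q : A.Q) (k : Fin A.m) (i j : Option (Fin A.m)) (a : α) (q' : A.Q)

/-- Membership of a transition in the transition relation `δ` of the PIA. -/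
def PTransMem {α : Type} (A : PIA α) : PTrans A → Prop
  | .silent q q' => A.silent q q'
  | .move q k i j a q' => A.move q k i j a q'

/-- `InsertBetween k i j O O'`: the arrangement `O'` (a linear order on a subset
of the pebbles, represented as a list) is obtained from `O` by removing pebble
`k` and re-inserting it strictly between pebble `i` (or the left boundary, if
`i = none`) and pebble `j` (or the right boundary, if `j = none`), preserving
the relative order of all other pebbles. -/
def InsertBetween {m : ℕ} (k : Fin m) (i j : Option (Fin m))
    (O O' : List (Fin m)) : Prop :=
  ∃ l₁ l₂ : List (Fin m), O.erase k = l₁ ++ l₂ ∧ O' = l₁ ++ k :: l₂ ∧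
    (∀ p, i = some p → p ∈ l₁) ∧ (∀ p, j = some p → p ∈ l₂)

/-- `FeasSeq A q O ts q' O'`: the sequence of transitions `ts` is feasible from
state `q` and arrangement `O`, ending in state `q'` and arrangement `O'`:
silent transitions preserve the arrangement, and each move transition
`move(k; i, j)` inserts `k` strictly between `i` and `j`. -/
inductive FeasSeq {α : Type} (A : PIA α) :
    A.Q → List (Fin A.m) → List (PTrans A) → A.Q → List (Fin A.m) → Prop
  | nil (q : A.Q) (O : List (Fin A.m)) : FeasSeq A q O [] q O
  | silent {q q' q'' : A.Q} {O O'' : List (Fin A.m)} {ts : List (PTrans A)} :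
      A.silent q q' → FeasSeq A q' O ts q'' O'' →
      FeasSeq A q O (PTrans.silent q q' :: ts) q'' O''
  | move {q q' q'' : A.Q} {k : Fin A.m} {i j : Option (Fin A.m)} {a : α}
      {O O' O'' : List (Fin A.m)} {ts : List (PTrans A)} :
      A.move q k i j a q' → InsertBetween k i j O O' →
      FeasSeq A q' O' ts q'' O'' →
      FeasSeq A q O (PTrans.move q k i j a q' :: ts) q'' O''

/-- A step of the PIA performing a specific transition `t`. -/
def PIAStepT {α : Type} (A : PIA α) {n : ℕ} (u : Fin n → α) :
    PTrans A → PIAConfig A n → PIAConfig A n → Prop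
  | .silent q q', c, c' =>
      A.silent q q' ∧ c.q = q ∧ c'.q = q' ∧ c'.ρ = c.ρ ∧ c'.N = c.N
  | .move q k i j a q', c, c' =>
      A.move q k i j a q' ∧ c.q = q ∧ c'.q = q' ∧
      ∃ ℓ : Fin n, u ℓ = a ∧ ℓ ∉ c.N ∧ leftOK c.ρ i ℓ ∧ rightOK c.ρ j ℓ ∧
        c'.ρ = Function.update c.ρ k (some ℓ) ∧ c'.N = insert ℓ c.N

/-- `RunSeq A u c ts c'`: the sequence of transitions `ts` together with the
induced sequence of configurations forms a computation of `A` on `u` from `c`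
to `c'`. -/
inductive RunSeq {α : Type} (A : PIA α) {n : ℕ} (u : Fin n → α) :
    PIAConfig A n → List (PTrans A) → PIAConfig A n → Prop
  | nil (c : PIAConfig A n) : RunSeq A u c [] c
  | cons {c c' c'' : PIAConfig A n} {t : PTrans A} {ts : List (PTrans A)} :
      PIAStepT A u t c c' → RunSeq A u c' ts c'' → RunSeq A u c (t :: ts) c''


namespace NodupCount
variable {m : ℕ}

noncomputable def full (l : List (Fin m)) : List (Fin m) :=
  l ++ ((Finset.univ \ l.toFinset).sort (· ≤ ·))

lemma full_nodup {l : List (Fin m)} (h : l.Nodup) : (full l).Nodup := by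
  refine List.Nodup.append h (Finset.sort_nodup _ _) ?_
  intro x hx hx'
  have := (Finset.mem_sort (α := Fin m) (· ≤ ·)).1 hx'
  simp [List.mem_toFinset] at this
  exact this hx

lemma full_length {l : List (Fin m)} (h : l.Nodup) : (full l).length = m := by
  have h1 : l.toFinset.card = l.length := List.toFinset_card_of_nodup h
  have h2 : l.toFinset.card ≤ m := by
    simpa using Finset.card_le_card (Finset.subset_univ l.toFinset)
  simp [full, Finset.length_sort, Finset.card_univ_diff, h1]
  omega

noncomputable def perm {l : List (Fin m)} (h : l.Nodup) : Equiv.Perm (Fin m) :=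
  Equiv.ofBijective (fun i => (full l).get (Fin.cast (full_length h).symm i))
    (by
      have hinj : Function.Injective (full l).get :=
        (List.nodup_iff_injective_get).1 (full_nodup h)
      have : Function.Injective
          (fun i : Fin m => (full l).get (Fin.cast (full_length h).symm i)) := by
        intro a b hab
        have := hinj hab
        simpa [Fin.ext_iff] using this
      exact Finite.injective_iff_bijective.1 this)

lemma take_full {l : List (Fin m)} : (full l).take l.length = l :=
  List.take_left

lemma card_le : Nat.card {l : List (Fin m) // l.Nodup} ≤ 2 ^ m * Nat.factorial m := by
  classical
  have hinj : Function.Injective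
      (fun l : {l : List (Fin m) // l.Nodup} => (l.1.toFinset, perm l.2)) := by
    rintro ⟨l₁, h₁⟩ ⟨l₂, h₂⟩ hEq
    simp only [Prod.mk.injEq] at hEq
    obtain ⟨hfin, hperm⟩ := hEq
    have hlen : l₁.length = l₂.length := by
      rw [← List.toFinset_card_of_nodup h₁, ← List.toFinset_card_of_nodup h₂, hfin]
    have hfull : full l₁ = full l₂ := by
      apply List.ext_get
      · rw [full_length h₁, full_length h₂]
      · intro n hn1 hn2
        have hn : n < m := by rwa [full_length h₁] at hn1
        have := congrFun (congrArg (fun e : Equiv.Perm (Fin m) => (e : Fin m → Fin m)) hperm) ⟨n, hn⟩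
        simpa [perm, Equiv.ofBijective] using this
    have : l₁ = l₂ := by
      rw [← take_full (l := l₁), ← take_full (l := l₂), hfull, hlen]
    simp [this]
  have := Nat.card_le_card_of_injective _ hinj
  simpa [Nat.card_eq_fintype_card, Fintype.card_perm] using this

end NodupCount

lemma feasSeq_append {α : Type} (A : PIA α) {q q' q'' : A.Q}
    {O O' O'' : List (Fin A.m)} {ts ts' : List (PTrans A)}
    (h1 : FeasSeq A q O ts q' O') (h2 : FeasSeq A q' O' ts' q'' O'') :
    FeasSeq A q O (ts ++ ts') q'' O'' := by
  induction h1 with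
  | nil => simpa
  | silent hs _ ih => exact FeasSeq.silent hs (ih h2)
  | move hm hins _ ih => exact FeasSeq.move hm hins (ih h2)

/-- The number of arrangements of `m` pebbles (linear orders on subsets of
`[m]`, i.e. duplicate-free lists over `Fin m`) is at most `2^m · m!`; and if a
feasible transition sequence passes twice through the same state and
arrangement (in particular after two occurrences of an equal transition with
equal arrangements), then deleting the segment between the two occurrences
yields a feasible sequence ending in the same state and arrangement. -/
theorem arrangements_card_and_feasible_deletion {α : Type} (m : ℕ) :
    (Nat.card {l : List (Fin m) // l.Nodup} ≤ 2 ^ m * Nat.factorial m) ∧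
    (∀ (A : PIA α) (q : A.Q) (O : List (Fin A.m))
        (ts₁ ts₂ ts₃ : List (PTrans A)) (q₁ : A.Q) (O₁ : List (Fin A.m))
        (q₃ : A.Q) (O₃ : List (Fin A.m)),
      FeasSeq A q O ts₁ q₁ O₁ →
      FeasSeq A q₁ O₁ ts₂ q₁ O₁ →
      FeasSeq A q₁ O₁ ts₃ q₃ O₃ →
      FeasSeq A q O (ts₁ ++ ts₃) q₃ O₃) := by
  refine ⟨NodupCount.card_le, ?_⟩
  intro A q O ts₁ ts₂ ts₃ q₁ O₁ q₃ O₃ h1 _ h3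
  exact feasSeq_append A h1 h3
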